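/- For every integer k ≥ 1, the function x ↦ (1 − (1 − x)^k)/(k x) is decreasing (antitone) on the interval (0, 1/k]. -/

import Mathlib

theorem one_sub_pow_div_antitone (k : ℕ) (hk : 1 ≤ k) :
    AntitoneOn (fun x : ℝ => (1 - (1 - x) ^ k) / (k * x)) (Set.Ioc (0:ℝ) (1 / k)) := by
  have hk0 : (0:ℝ) < k := by exact_mod_cast hk
  have hk1 : (1:ℝ) ≤ k := by exact_mod_cast hk
  -- convexity of t ↦ (1-t)^k on Iic 1
  have hconv : ConvexOn ℝ (Set.Iic (1:ℝ)) (fun t : ℝ => (1 - t) ^ k) := by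
    have h := (convexOn_pow k).comp_affineMap (AffineMap.lineMap (1:ℝ) (0:ℝ) : ℝ →ᵃ[ℝ] ℝ)
    have hs : (AffineMap.lineMap (1:ℝ) (0:ℝ) : ℝ →ᵃ[ℝ] ℝ) ⁻¹' Set.Ici (0:ℝ) = Set.Iic 1 := by
      ext t
      simp [AffineMap.lineMap_apply]
    have hf : ((fun x : ℝ => x ^ k) ∘ (AffineMap.lineMap (1:ℝ) (0:ℝ) : ℝ →ᵃ[ℝ] ℝ))
        = fun t : ℝ => (1 - t) ^ k := by
      funext t
      simp [AffineMap.lineMap_apply]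
      ring_nf
    rw [hs, hf] at h
    exact h
  intro x hx y hy hxy
  obtain ⟨hx0, hx1⟩ := hx
  obtain ⟨hy0, hy1⟩ := hy
  have hy1' : y ≤ 1 := hy1.trans (by rw [div_le_one hk0]; exact hk1)
  have hab : (1 - x / y) + x / y = 1 := by ring
  have ha : 0 ≤ 1 - x / y := by
    have : x / y ≤ 1 := (div_le_one hy0).mpr hxy
    linarith
  have hb : 0 ≤ x / y := div_nonneg hx0.le hy0.le
  have key := hconv.2 (Set.mem_Iic.mpr (by linarith : (0:ℝ) ≤ 1))
      (Set.mem_Iic.mpr hy1') ha hb hab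
  simp only [smul_eq_mul, mul_zero, zero_add] at key
  rw [div_mul_cancel₀ _ (ne_of_gt hy0)] at key
  -- key : (1 - x)^k ≤ (1 - x/y) * 1^k + x/y * (1-y)^k
  have key2 : y * (1 - x) ^ k ≤ (y - x) + x * (1 - y) ^ k := by
    have h1 := mul_le_mul_of_nonneg_left key hy0.le
    have h2 : y * ((1 - x / y) * (1 - 0) ^ k + x / y * (1 - y) ^ k)
        = (y - x) + x * (1 - y) ^ k := by
      field_simp
      ring
    linarith [h1, h2.ge, h2.le]
  simp only
  rw [div_le_div_iff₀ (by positivity) (by positivity)]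
  nlinarith [key2, hk0]
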